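/- Let (P₁,P₂,P₃,P₄) be nonzero null vectors in ℂ^{2,1}, pairwise linearly independent, and set X₁ = X(p₁,p₂,p₃,p₄), X₂ = X(p₁,p₃,p₂,p₄), A = 𝔸(p₁,p₂,p₃). Then the vectors P₁,P₂,P₃,P₄ span a complex subspace of ℂ³ of dimension 2 (i.e. the quadruple is ℂ-plane, all four points lying on one chain) if and only if A = π/2 or A = −π/2, X₁ and X₂ are real numbers, and X₁ + X₂ = 1. -/

import Mathlib

open Complex Matrix
open scoped ComplexConjugate

noncomputable section

/-- The Hermitian form of signature `(n,1)` on `ℂ^{n+1}`: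
`⟨Z,W⟩ = Z₁·conj W_{n+1} + Z₂·conj W₂ + ⋯ + Z_n·conj W_n + Z_{n+1}·conj W₁`. -/
def herm {n : ℕ} (Z W : Fin (n + 1) → ℂ) : ℂ :=
  Z 0 * conj (W (Fin.last n)) + Z (Fin.last n) * conj (W 0) +
    ∑ i ∈ Finset.univ.filter (fun i : Fin (n + 1) => i ≠ 0 ∧ i ≠ Fin.last n),
      Z i * conj (W i)

/-- The Gram matrix of a quadruple of vectors. -/
def gram {n : ℕ} (P : Fin 4 → Fin (n + 1) → ℂ) : Matrix (Fin 4) (Fin 4) ℂ :=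
  fun i j => herm (P i) (P j)

/-- A quadruple of nonzero null vectors, pairwise linearly independent. -/
def IsNullQuadruple {n : ℕ} (P : Fin 4 → Fin (n + 1) → ℂ) : Prop :=
  (∀ i, P i ≠ 0) ∧ (∀ i, herm (P i) (P i) = 0) ∧
    ∀ i j, i ≠ j → LinearIndependent ℂ ![P i, P j]

/-- The Korányi–Reimann complex cross-ratio. -/
def crossRatio {n : ℕ} (P₁ P₂ P₃ P₄ : Fin (n + 1) → ℂ) : ℂ :=
  (herm P₃ P₁ * herm P₄ P₂) / (herm P₄ P₁ * herm P₃ P₂)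

/-- Cartan's angular invariant. -/
def cartan {n : ℕ} (P₁ P₂ P₃ : Fin (n + 1) → ℂ) : ℝ :=
  (-(herm P₁ P₂ * herm P₂ P₃ * herm P₃ P₁)).arg

/-- `G` is the normalized Gram matrix of the quadruple `P`. -/
def IsNormalizedGram {n : ℕ} (P : Fin 4 → Fin (n + 1) → ℂ)
    (G : Matrix (Fin 4) (Fin 4) ℂ) : Prop :=
  (∃ d : Fin 4 → ℂ, (∀ i, d i ≠ 0) ∧
      G = (Matrix.diagonal d)ᴴ * gram P * Matrix.diagonal d) ∧
    G 0 1 = 1 ∧ G 1 2 = 1 ∧ G 2 3 = 1 ∧ ‖G 0 2‖ = 1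

/-- Two quadruples are congruent if a linear map preserving the Hermitian form
sends one to the other up to nonzero scalars. -/
def HermCongruent {n : ℕ} (P P' : Fin 4 → Fin (n + 1) → ℂ) : Prop :=
  ∃ A : (Fin (n + 1) → ℂ) →ₗ[ℂ] (Fin (n + 1) → ℂ),
    (∀ Z W, herm (A Z) (A W) = herm Z W) ∧
    ∃ lam : Fin 4 → ℂ, (∀ i, lam i ≠ 0) ∧ ∀ i, A (P i) = lam i • P' i

lemma herm3 (Z W : Fin 3 → ℂ) :
    herm Z W = Z 0 * conj (W 2) + Z 2 * conj (W 0) + Z 1 * conj (W 1) := by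
  rw [herm]
  rw [show (Finset.univ.filter (fun i : Fin 3 => i ≠ 0 ∧ i ≠ Fin.last 2)) = {1} by decide]
  simp [Fin.last]

lemma herm_conj (Z W : Fin 3 → ℂ) : conj (herm Z W) = herm W Z := by
  simp [herm3]; ring

lemma herm_expand_left (s t : ℂ) (X Y Z W : Fin 3 → ℂ) :
    herm (X - s • Y - t • Z) W = herm X W - s * herm Y W - t * herm Z W := by
  simp [herm3]; ring

lemma herm_expand_right (s t : ℂ) (W X Y Z : Fin 3 → ℂ) :
    herm W (X - s • Y - t • Z) = herm W X - conj s * herm W Y - conj t * herm W Z := by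
  simp [herm3]; ring

lemma herm_add_smul (s t : ℂ) (Y Z W : Fin 3 → ℂ) :
    herm (s • Y + t • Z) W = s * herm Y W + t * herm Z W := by
  simp [herm3]; ring

lemma conj_self_zero {z : ℂ} (hz : z * conj z = 0) : z = 0 := by
  rw [Complex.mul_conj] at hz
  exact_mod_cast Complex.normSq_eq_zero.mp (by exact_mod_cast hz)

lemma null_orth {P Q : Fin 3 → ℂ} (hP : herm P P = 0) (hPne : P ≠ 0)
    (hQ : herm Q Q = 0) (hPQ : herm P Q = 0) : ∃ μ : ℂ, Q = μ • P := by
  by_cases h0 : P 0 = 0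
  · have hP1 : P 1 = 0 := by
      have h := hP
      rw [herm3, h0] at h
      simp only [map_zero, mul_zero, zero_mul, zero_add, add_zero] at h
      exact conj_self_zero h
    have hP2 : P 2 ≠ 0 := by
      intro h2
      exact hPne (funext fun i => by fin_cases i <;> simp [h0, hP1, h2])
    have hQ0 : Q 0 = 0 := by
      have h := hPQ
      rw [herm3, h0, hP1] at h
      simp only [map_zero, mul_zero, zero_mul, zero_add, add_zero] at h
      rcases mul_eq_zero.mp h with h | h
      · exact absurd h hP2
      · simpa using congrArg conj h
    have hQ1 : Q 1 = 0 := by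
      have h := hQ
      rw [herm3, hQ0] at h
      simp only [map_zero, mul_zero, zero_mul, zero_add, add_zero] at h
      exact conj_self_zero h
    refine ⟨Q 2 / P 2, funext fun i => ?_⟩
    fin_cases i <;> simp [hQ0, hQ1, h0, hP1]
    field_simp
  · set μ := Q 0 / P 0 with hμ
    set Q' := Q - μ • P - (0 : ℂ) • P with hQ'
    have hQ'0 : Q' 0 = 0 := by
      simp [hQ', hμ]
      field_simp
      ring
    have hQP : herm Q P = 0 := by rw [← herm_conj, hPQ, map_zero]
    have hQ'Q' : herm Q' Q' = 0 := by
      rw [hQ', herm_expand_left]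
      simp only [herm_expand_right]
      rw [hP, hPQ, hQP, hQ]
      ring
    have hPQ' : herm P Q' = 0 := by
      rw [hQ', herm_expand_right, hP, hPQ]; ring
    have hQ'1 : Q' 1 = 0 := by
      have h := hQ'Q'
      rw [herm3, hQ'0] at h
      simp only [map_zero, mul_zero, zero_mul, zero_add, add_zero] at h
      exact conj_self_zero h
    have hQ'2 : Q' 2 = 0 := by
      have h := hPQ'
      rw [herm3, hQ'0, hQ'1] at h
      simp only [map_zero, mul_zero, zero_mul, zero_add, add_zero] at h
      rcases mul_eq_zero.mp h with h | h
      · exact absurd h h0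
      · simpa using congrArg conj h
    have hz : Q' = 0 := funext fun i => by fin_cases i <;> assumption
    refine ⟨μ, ?_⟩
    have h' : Q - μ • P = 0 := by
      have := hz
      rw [hQ'] at this
      simpa using this
    exact sub_eq_zero.mp h'

lemma herm_ne_zero {X Y : Fin 3 → ℂ} (hX : herm X X = 0) (hXne : X ≠ 0)
    (hY : herm Y Y = 0) (hli : LinearIndependent ℂ ![X, Y]) : herm X Y ≠ 0 := by
  intro h
  obtain ⟨μ, hμ⟩ := null_orth hX hXne hY h
  obtain ⟨hY0, h2⟩ := linearIndependent_fin2.mp hli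
  simp only [Matrix.cons_val_zero, Matrix.cons_val_one, Matrix.head_cons] at hY0 h2
  by_cases hμ0 : μ = 0
  · exact hY0 (by simpa [hμ0] using hμ)
  · exact h2 μ⁻¹ (by rw [hμ, smul_smul, inv_mul_cancel₀ hμ0, one_smul])

lemma span_rank_two {P : Fin 4 → Fin 3 → ℂ} (hli : LinearIndependent ℂ ![P 0, P 1]) :
    (Module.finrank ℂ (Submodule.span ℂ (Set.range P)) = 2) ↔
      (P 2 ∈ Submodule.span ℂ {P 0, P 1} ∧ P 3 ∈ Submodule.span ℂ {P 0, P 1}) := by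
  have hW2 : Module.finrank ℂ (Submodule.span ℂ ({P 0, P 1} : Set (Fin 3 → ℂ))) = 2 := by
    have := finrank_span_eq_card hli
    rw [show Set.range ![P 0, P 1] = {P 0, P 1} by
      simp [Matrix.range_cons, Matrix.range_empty, Set.pair_comm]] at this
    simpa using this
  have hle : Submodule.span ℂ ({P 0, P 1} : Set (Fin 3 → ℂ)) ≤
      Submodule.span ℂ (Set.range P) := by
    apply Submodule.span_mono
    rintro x (rfl | rfl)
    · exact ⟨0, rfl⟩
    · exact ⟨1, rfl⟩
  constructor
  · intro h
    have heq : Submodule.span ℂ ({P 0, P 1} : Set (Fin 3 → ℂ)) =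
        Submodule.span ℂ (Set.range P) :=
      Submodule.eq_of_le_of_finrank_le hle (by rw [h, hW2])
    constructor
    · rw [heq]; exact Submodule.subset_span ⟨2, rfl⟩
    · rw [heq]; exact Submodule.subset_span ⟨3, rfl⟩
  · rintro ⟨h2, h3⟩
    have heq : Submodule.span ℂ (Set.range P) =
        Submodule.span ℂ ({P 0, P 1} : Set (Fin 3 → ℂ)) := by
      refine le_antisymm (Submodule.span_le.mpr ?_) hle
      rintro x ⟨i, rfl⟩
      fin_cases i
      · exact Submodule.subset_span (Set.mem_insert _ _)
      · exact Submodule.subset_span (Set.mem_insert_of_mem _ rfl)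
      · exact h2
      · exact h3
    rw [heq, hW2]

lemma re_eq_zero_iff {z : ℂ} : z + conj z = 0 ↔ z.re = 0 := by
  constructor
  · intro h
    have h' := congrArg Complex.re h
    simp [Complex.add_re, Complex.conj_re] at h'
    linarith
  · intro h
    apply Complex.ext <;> simp [h]

lemma arg_pm {z : ℂ} (hz : z ≠ 0) :
    ((-z).arg = Real.pi / 2 ∨ (-z).arg = -(Real.pi / 2)) ↔ z + conj z = 0 := by
  rw [Complex.arg_eq_pi_div_two_iff, Complex.arg_eq_neg_pi_div_two_iff, re_eq_zero_iff]
  constructor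
  · rintro (⟨h1, _⟩ | ⟨h1, _⟩) <;> simpa using h1
  · intro h1
    have h2 : (-z).re = 0 := by simpa using h1
    rcases lt_trichotomy (-z).im 0 with hi | hi | hi
    · exact Or.inr ⟨h2, hi⟩
    · exact absurd (Complex.ext h2 hi) (neg_ne_zero.mpr hz)
    · exact Or.inl ⟨h2, hi⟩

theorem stmt14' (P : Fin 4 → Fin 3 → ℂ)
    (hne : ∀ i, P i ≠ 0) (hnull : ∀ i, herm (P i) (P i) = 0)
    (hli : ∀ i j, i ≠ j → LinearIndependent ℂ ![P i, P j])
    (X₁ X₂ : ℂ) (A : ℝ)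
    (hX₁ : X₁ = crossRatio (P 0) (P 1) (P 2) (P 3))
    (hX₂ : X₂ = crossRatio (P 0) (P 2) (P 1) (P 3))
    (hA : A = cartan (P 0) (P 1) (P 2)) :
    Module.finrank ℂ (Submodule.span ℂ (Set.range P)) = 2 ↔
      ((A = Real.pi / 2 ∨ A = -(Real.pi / 2)) ∧
        X₁.im = 0 ∧ X₂.im = 0 ∧ X₁ + X₂ = 1) := by
  set a := herm (P 0) (P 1) with ha'
  set b := herm (P 1) (P 2) with hb'
  set c := herm (P 2) (P 0) with hc'
  set d := herm (P 0) (P 3) with hd'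
  set e := herm (P 1) (P 3) with he'
  set f := herm (P 2) (P 3) with hf'
  have ha : a ≠ 0 := herm_ne_zero (hnull 0) (hne 0) (hnull 1) (hli 0 1 (by decide))
  have hb : b ≠ 0 := herm_ne_zero (hnull 1) (hne 1) (hnull 2) (hli 1 2 (by decide))
  have hc : c ≠ 0 := herm_ne_zero (hnull 2) (hne 2) (hnull 0) (hli 2 0 (by decide))
  have hd : d ≠ 0 := herm_ne_zero (hnull 0) (hne 0) (hnull 3) (hli 0 3 (by decide))
  have he : e ≠ 0 := herm_ne_zero (hnull 1) (hne 1) (hnull 3) (hli 1 3 (by decide))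
  have hca : conj a ≠ 0 := by simpa using ha
  have hcb : conj b ≠ 0 := by simpa using hb
  have hcc : conj c ≠ 0 := by simpa using hc
  have hcd : conj d ≠ 0 := by simpa using hd
  have hce : conj e ≠ 0 := by simpa using he
  have h10 : herm (P 1) (P 0) = conj a := (herm_conj _ _).symm
  have h21 : herm (P 2) (P 1) = conj b := (herm_conj _ _).symm
  have h02 : herm (P 0) (P 2) = conj c := (herm_conj _ _).symm
  have h30 : herm (P 3) (P 0) = conj d := (herm_conj _ _).symm
  have h31 : herm (P 3) (P 1) = conj e := (herm_conj _ _).symm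
  have h32 : herm (P 3) (P 2) = conj f := (herm_conj _ _).symm
  -- explicit cross-ratios
  have hX₁' : X₁ = (c * conj e) / (conj d * conj b) := by
    rw [hX₁, crossRatio, h31, h30, h21]
  have hX₂' : X₂ = (conj a * conj f) / (conj d * b) := by
    rw [hX₂, crossRatio, h10, h32, h30]
  -- the angular invariant condition
  have habc : -(a * b * c) ≠ 0 := by
    simp only [neg_ne_zero]
    exact mul_ne_zero (mul_ne_zero ha hb) hc
  have harg : (A = Real.pi / 2 ∨ A = -(Real.pi / 2)) ↔
      a * b * c + conj (a * b * c) = 0 := by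
    rw [hA, cartan, ← ha', ← hb', ← hc']
    exact arg_pm (mul_ne_zero (mul_ne_zero ha hb) hc)
  -- the auxiliary vectors
  set s₂ := conj b / a with hs₂
  set t₂ := c / conj a with ht₂
  set s₃ := conj e / a with hs₃
  set t₃ := conj d / conj a with ht₃
  set Q₂ := P 2 - s₂ • P 0 - t₂ • P 1 with hQ₂
  set Q₃ := P 3 - s₃ • P 0 - t₃ • P 1 with hQ₃
  have hQ₂P0 : herm Q₂ (P 0) = 0 := by
    rw [hQ₂, herm_expand_left, ← hc', hnull 0, h10, ht₂]
    field_simp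
    ring
  have hQ₂P1 : herm Q₂ (P 1) = 0 := by
    rw [hQ₂, herm_expand_left, h21, ← ha', hnull 1, hs₂]
    field_simp
    ring
  have hQ₃P0 : herm Q₃ (P 0) = 0 := by
    rw [hQ₃, herm_expand_left, h30, hnull 0, h10, ht₃]
    field_simp
    ring
  have hQ₃P1 : herm Q₃ (P 1) = 0 := by
    rw [hQ₃, herm_expand_left, h31, ← ha', hnull 1, hs₃]
    field_simp
    ring
  have hQ₂Q₂ : herm Q₂ Q₂ =
      -((a * b * c + conj a * (conj b * conj c)) / (a * conj a)) := by
    rw [hQ₂, herm_expand_left]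
    simp only [herm_expand_right]
    rw [← hc', h21, h02, ← hb', ← ha', h10, hnull 0, hnull 1, hnull 2, hs₂, ht₂]
    field_simp
    ring
  have hQ₃Q₃ : herm Q₃ Q₃ =
      -((a * e * conj d + conj a * (conj e * d)) / (a * conj a)) := by
    rw [hQ₃, herm_expand_left]
    simp only [herm_expand_right]
    rw [h30, h31, ← hd', ← he', ← ha', h10, hnull 0, hnull 1, hnull 3, hs₃, ht₃]
    field_simp
    ring
  have herm0 : herm (0 : Fin 3 → ℂ) 0 = 0 := by simp [herm3]
  have hconv : conj (a * b * c) = conj a * (conj b * conj c) := by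
    simp only [_root_.map_mul]; ring
  -- zero iff null
  have hz2 : herm Q₂ Q₂ = 0 → Q₂ = 0 := by
    intro h
    obtain ⟨μ, hμ⟩ := null_orth (hnull 0) (hne 0) h
      (by rw [← herm_conj, hQ₂P0, map_zero])
    obtain ⟨ν, hν⟩ := null_orth (hnull 1) (hne 1) h
      (by rw [← herm_conj, hQ₂P1, map_zero])
    by_cases hν0 : ν = 0
    · rw [hν, hν0, zero_smul]
    · exfalso
      have h01 := (linearIndependent_fin2.mp (hli 1 0 (by decide))).2 (ν⁻¹ * μ)
      simp only [Matrix.cons_val_zero, Matrix.cons_val_one, Matrix.head_cons] at h01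
      exact h01 (by
        rw [mul_smul, ← hμ, hν, smul_smul, inv_mul_cancel₀ hν0, one_smul])
  have hz3 : herm Q₃ Q₃ = 0 → Q₃ = 0 := by
    intro h
    obtain ⟨μ, hμ⟩ := null_orth (hnull 0) (hne 0) h
      (by rw [← herm_conj, hQ₃P0, map_zero])
    obtain ⟨ν, hν⟩ := null_orth (hnull 1) (hne 1) h
      (by rw [← herm_conj, hQ₃P1, map_zero])
    by_cases hν0 : ν = 0
    · rw [hν, hν0, zero_smul]
    · exfalso
      have h01 := (linearIndependent_fin2.mp (hli 1 0 (by decide))).2 (ν⁻¹ * μ)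
      simp only [Matrix.cons_val_zero, Matrix.cons_val_one, Matrix.head_cons] at h01
      exact h01 (by
        rw [mul_smul, ← hμ, hν, smul_smul, inv_mul_cancel₀ hν0, one_smul])
  have hC1iff : herm Q₂ Q₂ = 0 ↔ a * b * c + conj a * (conj b * conj c) = 0 := by
    rw [hQ₂Q₂, neg_eq_zero, div_eq_zero_iff]
    simp [ha, hca]
  have hC2iff : herm Q₃ Q₃ = 0 ↔ a * e * conj d + conj a * (conj e * d) = 0 := by
    rw [hQ₃Q₃, neg_eq_zero, div_eq_zero_iff]
    simp [ha, hca]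
  have hrep2 : a * b * c + conj a * (conj b * conj c) = 0 →
      s₂ • P 0 + t₂ • P 1 = P 2 := by
    intro h
    have hz := hz2 (hC1iff.mpr h)
    rw [hQ₂, sub_sub] at hz
    exact (sub_eq_zero.mp hz).symm
  have hrep3 : a * e * conj d + conj a * (conj e * d) = 0 →
      s₃ • P 0 + t₃ • P 1 = P 3 := by
    intro h
    have hz := hz3 (hC2iff.mpr h)
    rw [hQ₃, sub_sub] at hz
    exact (sub_eq_zero.mp hz).symm
  have hmem2 : (P 2 ∈ Submodule.span ℂ ({P 0, P 1} : Set (Fin 3 → ℂ))) ↔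
      a * b * c + conj a * (conj b * conj c) = 0 := by
    constructor
    · intro h
      obtain ⟨s, t, hst⟩ := Submodule.mem_span_pair.mp h
      have hsv : conj b = s * a := by
        rw [← h21, ← hst, herm_add_smul, ← ha', hnull 1]; ring
      have htv : c = t * conj a := by
        rw [hc', ← hst, herm_add_smul, hnull 0, h10]; ring
      have hseq : s₂ = s := by rw [hs₂, hsv]; field_simp
      have hteq : t₂ = t := by rw [ht₂, htv]; field_simp
      apply hC1iff.mp
      have : Q₂ = 0 := by
        rw [hQ₂, hseq, hteq, ← hst]; abel
      rw [this, herm0]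
    · intro h
      exact Submodule.mem_span_pair.mpr ⟨s₂, t₂, hrep2 h⟩
  have hmem3 : (P 3 ∈ Submodule.span ℂ ({P 0, P 1} : Set (Fin 3 → ℂ))) ↔
      a * e * conj d + conj a * (conj e * d) = 0 := by
    constructor
    · intro h
      obtain ⟨s, t, hst⟩ := Submodule.mem_span_pair.mp h
      have hsv : conj e = s * a := by
        rw [← h31, ← hst, herm_add_smul, ← ha', hnull 1]; try ring
      have htv : conj d = t * conj a := by
        rw [← h30, ← hst, herm_add_smul, hnull 0, h10]; try ring
      have hseq : s₃ = s := by rw [hs₃, hsv]; field_simp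
      have hteq : t₃ = t := by rw [ht₃, htv]; field_simp
      apply hC2iff.mp
      have : Q₃ = 0 := by
        rw [hQ₃, hseq, hteq, ← hst]; abel
      rw [this, herm0]
    · intro h
      exact Submodule.mem_span_pair.mpr ⟨s₃, t₃, hrep3 h⟩
  rw [span_rank_two (hli 0 1 (by decide)), hmem2, hmem3]
  constructor
  · rintro ⟨h1, h2⟩
    have hfval : f = s₂ * d + t₂ * e := by
      rw [hf', ← hrep2 h1, herm_add_smul, ← hd', ← he']
    have hfpoly : f * (a * conj a) = conj b * d * conj a + c * e * a := by
      rw [hfval, hs₂, ht₂]; field_simp; try ring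
    have hfpolyc : conj f * (conj a * a) = b * conj d * a + conj c * conj e * conj a := by
      have := congrArg conj hfpoly
      simp only [_root_.map_mul, _root_.map_add, Complex.conj_conj] at this
      linear_combination this
    refine ⟨harg.mpr (by rw [hconv]; exact h1), ?_, ?_, ?_⟩
    · rw [← Complex.conj_eq_iff_im, hX₁']
      simp only [map_div₀, _root_.map_mul, Complex.conj_conj]
      rw [div_eq_div_iff (mul_ne_zero hd hb) (mul_ne_zero hcd hcb)]
      apply mul_left_cancel₀ (mul_ne_zero ha hca)
      linear_combination (a * e * conj d) * h1 - (a * b * c) * h2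
    · rw [← Complex.conj_eq_iff_im, hX₂']
      simp only [map_div₀, _root_.map_mul, Complex.conj_conj]
      rw [div_eq_div_iff (mul_ne_zero hd hcb) (mul_ne_zero hcd hb)]
      apply mul_left_cancel₀ (mul_ne_zero ha hca)
      linear_combination (a * conj d * b) * hfpoly - (conj a * d * conj b) * hfpolyc
        + (a * b * c) * h2 - (conj a * conj e * d) * h1
    · rw [hX₁', hX₂', div_add_div _ _ (mul_ne_zero hcd hcb) (mul_ne_zero hcd hb),
        div_eq_one_iff_eq (mul_ne_zero (mul_ne_zero hcd hcb) (mul_ne_zero hcd hb))]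
      apply mul_left_cancel₀ ha
      linear_combination (conj d * conj b) * hfpolyc + (conj d * conj e) * h1
  · rintro ⟨hA2, him1, _, _⟩
    have h1 : a * b * c + conj a * (conj b * conj c) = 0 := by
      rw [← hconv]; exact harg.mp hA2
    have hX1r : conj X₁ = X₁ := Complex.conj_eq_iff_im.mpr him1
    rw [hX₁'] at hX1r
    simp only [map_div₀, _root_.map_mul, Complex.conj_conj] at hX1r
    have hT := (div_eq_div_iff (mul_ne_zero hd hb) (mul_ne_zero hcd hcb)).mp hX1r
    have key : (a * b * c) * (a * e * conj d + conj a * (conj e * d)) = 0 := by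
      linear_combination (a * e * conj d) * h1 - (a * conj a) * hT
    refine ⟨h1, ?_⟩
    rcases mul_eq_zero.mp key with h | h
    · exact absurd h (mul_ne_zero (mul_ne_zero ha hb) hc)
    · exact h

/-- characterization of ℂ-plane quadruples. -/
theorem stmt14 (P : Fin 4 → Fin 3 → ℂ) (hP : IsNullQuadruple (n := 2) P)
    (X₁ X₂ : ℂ) (A : ℝ)
    (hX₁ : X₁ = crossRatio (P 0) (P 1) (P 2) (P 3))
    (hX₂ : X₂ = crossRatio (P 0) (P 2) (P 1) (P 3))
    (hA : A = cartan (P 0) (P 1) (P 2)) :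
    Module.finrank ℂ (Submodule.span ℂ (Set.range P)) = 2 ↔
      ((A = Real.pi / 2 ∨ A = -(Real.pi / 2)) ∧
        X₁.im = 0 ∧ X₂.im = 0 ∧ X₁ + X₂ = 1) := by
  obtain ⟨hne, hnull, hli⟩ := hP
  exact stmt14' P hne hnull hli X₁ X₂ A hX₁ hX₂ hA
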